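/- (Lemma 4.4) Let X be an integer-valued random variable with probability mass function p_X, and let D, d > 0 be such that p_X(x) ≤ D·e^{−d·x²} for all integers x ≥ 0. Let p_N denote the probability mass function of S_N = X₁ + ⋯ + X_N for i.i.d. copies X₁, …, X_N of X. Then for all N ≥ 1 and all integers x ≥ 0, p_N(x) ≤ W^N · e^{−d·x²/N}, where W = D·√π/√d + 1 + 2D. (By symmetry, if instead p_X(x) ≤ D·e^{−d·x²} for all integers x ≤ 0, then p_N(x) ≤ W^N · e^{−d·x²/N} for all integers x ≤ 0.) -/

import Mathlib

open MeasureTheory Real Set Filter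
open scoped ENNReal NNReal

noncomputable section

/-- Extended moment generating function `E[e^{tX}]` for an integer random variable with
probability mass function `p`. -/
def MGFeZ (p : ℤ → ℝ) (t : ℝ) : ℝ≥0∞ :=
  ∑' k : ℤ, ENNReal.ofReal (Real.exp (t * k) * p k)

/-- Cumulant generating function (real-valued, meaningful where `MGFeZ` is finite). -/
def LamZ (p : ℤ → ℝ) (t : ℝ) : ℝ := Real.log (MGFeZ p t).toReal

/-- Extended-real-valued cumulant generating function. -/
def ELamZ (p : ℤ → ℝ) (t : ℝ) : EReal :=
  if MGFeZ p t = ⊤ then ⊤ else ((Real.log (MGFeZ p t).toReal : ℝ) : EReal)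

/-- Legendre transform `Λ*(y) = sup_x (y·x − Λ(x))`, with values in `EReal`. -/
def LegendreEZ (p : ℤ → ℝ) (y : ℝ) : EReal :=
  ⨆ x : ℝ, ((y * x : ℝ) : EReal) - ELamZ p x

/-- `iterConvZ p N` is the `N`-fold convolution of the probability mass function `p`, i.e. the
probability mass function of `S_N = X₁ + ⋯ + X_N` for i.i.d. `Xᵢ` with pmf `p`
(set to `0` for `N = 0`). -/
def iterConvZ (p : ℤ → ℝ) : ℕ → ℤ → ℝ
  | 0 => fun _ => 0
  | 1 => p
  | (n+2) => fun k => ∑' j : ℤ, iterConvZ p (n+1) (k - j) * p j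

end

-- gaussian nat tail lemma
lemma gauss_tail {d : ℝ} (hd : 0 < d) :
    Summable (fun n : ℕ => Real.exp (-d * ((n:ℝ)+1)^2)) ∧
    ∑' n : ℕ, Real.exp (-d * ((n:ℝ)+1)^2) ≤ Real.sqrt (π/d) / 2 := by
  have hint := integrable_exp_neg_mul_sq hd
  have hbound : ∀ n : ℕ, ∑ i ∈ Finset.range n, Real.exp (-d * ((i:ℝ)+1)^2) ≤ Real.sqrt (π/d)/2 := by
    intro n
    have step : ∀ i : ℕ, Real.exp (-d * ((i:ℝ)+1)^2)
        ≤ ∫ u in (i:ℝ)..((i:ℝ)+1), Real.exp (-d * u^2) := by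
      intro i
      have h0 : Real.exp (-d*((i:ℝ)+1)^2)
          = ∫ _ in (i:ℝ)..((i:ℝ)+1), Real.exp (-d*((i:ℝ)+1)^2) := by simp
      rw [h0]
      apply intervalIntegral.integral_mono_on (by linarith) intervalIntegrable_const
        hint.intervalIntegrable
      intro u hu
      have h1 : (i:ℝ) ≤ u := hu.1
      have h2 : u ≤ (i:ℝ)+1 := hu.2
      have hi : (0:ℝ) ≤ i := Nat.cast_nonneg i
      apply Real.exp_le_exp.2
      have h3 : (0:ℝ) ≤ u := le_trans hi h1
      have h4 : u^2 ≤ ((i:ℝ)+1)^2 := by nlinarith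
      nlinarith
    calc ∑ i ∈ Finset.range n, Real.exp (-d * ((i:ℝ)+1)^2)
        ≤ ∑ i ∈ Finset.range n, ∫ u in (i:ℝ)..((i:ℝ)+1), Real.exp (-d * u^2) :=
          Finset.sum_le_sum (fun i _ => step i)
      _ = ∫ u in (0:ℝ)..(n:ℝ), Real.exp (-d * u^2) := by
          have := intervalIntegral.sum_integral_adjacent_intervals
            (a := fun k : ℕ => (k:ℝ)) (f := fun u => Real.exp (-d * u^2)) (μ := volume)
            (n := n) (fun k _ => hint.intervalIntegrable)
          simpa using this
      _ ≤ ∫ u in Ioi (0:ℝ), Real.exp (-d * u^2) := by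
          rw [intervalIntegral.integral_of_le (Nat.cast_nonneg n)]
          apply setIntegral_mono_set hint.integrableOn
            (Filter.Eventually.of_forall fun u => (Real.exp_pos _).le)
            (HasSubset.Subset.eventuallyLE Ioc_subset_Ioi_self)
      _ = Real.sqrt (π/d)/2 := integral_gaussian_Ioi d
  have hnn : ∀ n : ℕ, 0 ≤ Real.exp (-d * ((n:ℝ)+1)^2) := fun n => (Real.exp_pos _).le
  exact ⟨summable_of_sum_range_le hnn hbound, tsum_le_of_sum_range_le hnn hbound⟩

lemma gauss_full_nat {d : ℝ} (hd : 0 < d) :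
    Summable (fun n : ℕ => Real.exp (-d * (n:ℝ)^2)) ∧
    ∑' n : ℕ, Real.exp (-d * (n:ℝ)^2) ≤ 1 + Real.sqrt (π/d) / 2 := by
  obtain ⟨hs, hb⟩ := gauss_tail hd
  have hs' : Summable (fun n : ℕ => Real.exp (-d * (n:ℝ)^2)) := by
    rw [← summable_nat_add_iff 1]
    convert hs using 2 with n
    exacts [rfl, by push_cast; ring_nf]
  constructor
  · exact hs'
  · rw [Summable.tsum_eq_zero_add hs']
    have ht : ∑' n : ℕ, Real.exp (-d * (((n+1:ℕ)):ℝ)^2) = ∑' n : ℕ, Real.exp (-d * ((n:ℝ)+1)^2) := by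
      congr 1; ext n; congr 1; push_cast; ring
    rw [ht]
    have h0 : Real.exp (-d * ((0:ℕ):ℝ)^2) = 1 := by norm_num
    rw [h0]
    linarith

set_option maxHeartbeats 1000000 in
set_option maxHeartbeats 1000000 in
lemma gauss_int {d : ℝ} (hd : 0 < d) (a : ℝ) :
    Summable (fun k : ℤ => Real.exp (-d * ((k:ℝ) - a)^2)) ∧
    ∑' k : ℤ, Real.exp (-d * ((k:ℝ) - a)^2) ≤ Real.sqrt (π/d) + 2 := by
  obtain ⟨hS, hB⟩ := gauss_full_nat hd
  set m : ℤ := ⌈a⌉ with hm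
  have hma : a ≤ (m:ℝ) := Int.le_ceil a
  have hma' : (m:ℝ) < a + 1 := Int.ceil_lt_add_one a
  set f : ℤ → ℝ := fun k => Real.exp (-d * ((k:ℝ) - a)^2) with hf
  have hpos : ∀ j : ℕ, f (m + j) ≤ Real.exp (-d * (j:ℝ)^2) := by
    intro j
    apply Real.exp_le_exp.2
    have h1 : (j:ℝ) ≤ ((m + j : ℤ):ℝ) - a := by push_cast; linarith
    have h2 : (0:ℝ) ≤ (j:ℝ) := Nat.cast_nonneg j
    nlinarith [pow_le_pow_left₀ h2 h1 2, hd.le]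
  have hneg : ∀ j : ℕ, f (m + (-(j + 1))) ≤ Real.exp (-d * (j:ℝ)^2) := by
    intro j
    apply Real.exp_le_exp.2
    have h1 : (j:ℝ) ≤ a - ((m + (-(j+1)) : ℤ):ℝ) := by push_cast; linarith
    have h2 : (0:ℝ) ≤ (j:ℝ) := Nat.cast_nonneg j
    nlinarith [pow_le_pow_left₀ h2 h1 2, hd.le]
  have hSpos : Summable (fun j : ℕ => f (m + j)) :=
    Summable.of_nonneg_of_le (fun j => (Real.exp_pos _).le) hpos hS
  have hSneg : Summable (fun j : ℕ => f (m + (-(j + 1)))) :=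
    Summable.of_nonneg_of_le (fun j => (Real.exp_pos _).le) hneg hS
  have hSsh : Summable (fun j : ℤ => f (m + j)) := by
    apply Summable.of_nat_of_neg_add_one hSpos
    exact hSneg
  have hSf : Summable f := (Equiv.addLeft m).summable_iff.mp hSsh
  refine ⟨hSf, ?_⟩
  have he : ∑' k : ℤ, f k = ∑' j : ℤ, f (m + j) := ((Equiv.addLeft m).tsum_eq f).symm
  have hsplit : ∑' j : ℤ, f (m + j)
      = (∑' j : ℕ, f (m + j)) + ∑' j : ℕ, f (m + (-(j+1))) :=
    tsum_of_nat_of_neg_add_one (f := fun j : ℤ => f (m + j)) hSpos hSneg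
  rw [he, hsplit]
  have b1 : ∑' j : ℕ, f (m + j) ≤ ∑' n : ℕ, Real.exp (-d * (n:ℝ)^2) := Summable.tsum_le_tsum hpos hSpos hS
  have b2 : ∑' j : ℕ, f (m + (-(j+1))) ≤ ∑' n : ℕ, Real.exp (-d * (n:ℝ)^2) := Summable.tsum_le_tsum hneg hSneg hS
  have hsq : (0:ℝ) ≤ Real.sqrt (π/d) := Real.sqrt_nonneg _
  linarith

set_option maxHeartbeats 1000000 in
lemma mgf_bound {p : ℤ → ℝ} {D d : ℝ} (hp : ∀ k, 0 ≤ p k) (hpsum : Summable p)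
    (hmass : ∑' k : ℤ, p k = 1) (hD : 0 < D) (hd : 0 < d)
    (hg : ∀ x : ℤ, 0 ≤ x → p x ≤ D * Real.exp (-d * (x:ℝ)^2)) (t : ℝ) (ht : 0 ≤ t) :
    Summable (fun k : ℤ => Real.exp (t * k) * p k) ∧
    ∑' k : ℤ, Real.exp (t * k) * p k
      ≤ (D * Real.sqrt π / Real.sqrt d + 1 + 2*D) * Real.exp (t^2/(4*d)) := by
  have hd0 : d ≠ 0 := ne_of_gt hd
  set a : ℝ := t/(2*d) with ha
  set E : ℝ := Real.exp (t^2/(4*d)) with hE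
  obtain ⟨hGS, hGB⟩ := gauss_int hd a
  set B : ℤ → ℝ := fun k => (D * E) * Real.exp (-d * ((k:ℝ)-a)^2) + p k with hB
  have hBsum : Summable B := (hGS.mul_left (D * E)).add hpsum
  have hle : ∀ k : ℤ, Real.exp (t*k) * p k ≤ B k := by
    intro k
    rcases le_or_gt 0 k with hk | hk
    · have h1 : Real.exp (t*k) * p k ≤ Real.exp (t*k) * (D * Real.exp (-d*(k:ℝ)^2)) :=
        mul_le_mul_of_nonneg_left (hg k hk) (Real.exp_pos _).le
      have h2 : Real.exp (t*k) * (D * Real.exp (-d*(k:ℝ)^2))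
          = (D * E) * Real.exp (-d * ((k:ℝ)-a)^2) := by
        rw [hE]
        rw [mul_left_comm, ← Real.exp_add, mul_assoc, ← Real.exp_add]
        congr 2
        rw [ha]; field_simp; ring
      have h3 : 0 ≤ p k := hp k
      simp only [hB]
      linarith
    · have hk' : (k:ℝ) ≤ 0 := by exact_mod_cast hk.le
      have h1 : Real.exp (t*k) ≤ 1 := Real.exp_le_one_iff.2 (mul_nonpos_of_nonneg_of_nonpos ht hk')
      have h2 : Real.exp (t*k) * p k ≤ p k := by
        nlinarith [hp k]
      have h3 : 0 ≤ (D * E) * Real.exp (-d * ((k:ℝ)-a)^2) := by positivity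
      simp only [hB]
      linarith
  have hsum : Summable (fun k : ℤ => Real.exp (t*k)*p k) :=
    Summable.of_nonneg_of_le (fun k => mul_nonneg (Real.exp_pos _).le (hp k)) hle hBsum
  refine ⟨hsum, ?_⟩
  have h1 : ∑' k : ℤ, Real.exp (t*k)*p k ≤ ∑' k : ℤ, B k := Summable.tsum_le_tsum hle hsum hBsum
  have h2 : ∑' k : ℤ, B k = (D*E) * (∑' k : ℤ, Real.exp (-d * ((k:ℝ)-a)^2)) + 1 := by
    rw [hB, Summable.tsum_add (hGS.mul_left (D*E)) hpsum, tsum_mul_left, hmass]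
  have h3 : ∑' k : ℤ, B k ≤ (D*E) * (Real.sqrt (π/d) + 2) + 1 := by
    rw [h2]
    have hDE : 0 ≤ D * E := by positivity
    nlinarith [mul_le_mul_of_nonneg_left hGB hDE]
  have hE1 : 1 ≤ E := Real.one_le_exp (by positivity)
  have hsqrt : Real.sqrt (π/d) = Real.sqrt π / Real.sqrt d := Real.sqrt_div pi_pos.le d
  calc ∑' k : ℤ, Real.exp (t*k)*p k ≤ (D*E) * (Real.sqrt (π/d) + 2) + 1 := h1.trans h3
    _ ≤ (D * Real.sqrt π / Real.sqrt d + 1 + 2*D) * E := by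
        rw [hsqrt]
        have key : (D * Real.sqrt π / Real.sqrt d + 1 + 2*D) * E
            - ((D*E) * (Real.sqrt π / Real.sqrt d + 2) + 1) = E - 1 := by ring
        linarith

lemma iterConvZ_succ_nonneg {p : ℤ → ℝ} (hp : ∀ k, 0 ≤ p k) :
    ∀ n : ℕ, ∀ x : ℤ, 0 ≤ iterConvZ p (n+1) x := by
  intro n
  induction n with
  | zero => exact hp
  | succ n ih =>
    intro x
    have : iterConvZ p (n+2) x = ∑' j : ℤ, iterConvZ p (n+1) (x - j) * p j := rfl
    rw [this]
    exact tsum_nonneg fun j => mul_nonneg (ih _) (hp j)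

lemma chernoff {p : ℤ → ℝ} (hp : ∀ k, 0 ≤ p k) (t : ℝ)
    (hs : Summable (fun k : ℤ => Real.exp (t * k) * p k)) :
    ∀ n : ℕ, ∀ x : ℤ, Real.exp (t * x) * iterConvZ p (n+1) x
      ≤ (∑' k : ℤ, Real.exp (t * k) * p k) ^ (n+1) := by
  set M : ℝ := ∑' k : ℤ, Real.exp (t * k) * p k with hM
  have hM0 : 0 ≤ M := tsum_nonneg fun k => mul_nonneg (Real.exp_pos _).le (hp k)
  intro n
  induction n with
  | zero =>
    intro x
    have h := Summable.le_tsum hs x (fun k _ => mul_nonneg (Real.exp_pos _).le (hp k))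
    simpa [iterConvZ] using h
  | succ n ih =>
    intro x
    have key : ∀ j : ℤ, Real.exp (t*x) * (iterConvZ p (n+1) (x - j) * p j)
        ≤ M^(n+1) * (Real.exp (t*j) * p j) := by
      intro j
      have e1 : Real.exp (t*((x - j : ℤ):ℝ)) * Real.exp (t*(j:ℝ)) = Real.exp (t*(x:ℝ)) := by
        rw [← Real.exp_add]; congr 1; push_cast; ring
      have h1 : Real.exp (t*(x:ℝ)) * (iterConvZ p (n+1) (x - j) * p j)
          = (Real.exp (t*((x - j : ℤ):ℝ)) * iterConvZ p (n+1) (x - j)) * (Real.exp (t*(j:ℝ)) * p j) := by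
        rw [← e1]; ring
      rw [h1]
      exact mul_le_mul_of_nonneg_right (ih (x - j))
        (mul_nonneg (Real.exp_pos _).le (hp j))
    have hrhs : Summable (fun j : ℤ => M^(n+1) * (Real.exp (t*j) * p j)) := hs.mul_left _
    have hlhs_sum : Summable (fun j : ℤ => Real.exp (t*x) * (iterConvZ p (n+1) (x-j) * p j)) :=
      Summable.of_nonneg_of_le
        (fun j => mul_nonneg (Real.exp_pos _).le
          (mul_nonneg (iterConvZ_succ_nonneg hp n _) (hp j))) key hrhs
    have heq : Real.exp (t*x) * iterConvZ p (n+1+1) x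
        = ∑' j : ℤ, Real.exp (t*x) * (iterConvZ p (n+1) (x-j) * p j) := by
      have h0 : iterConvZ p (n+2) x = ∑' j : ℤ, iterConvZ p (n+1) (x - j) * p j := rfl
      rw [h0, ← tsum_mul_left]
    rw [heq]
    calc ∑' j : ℤ, Real.exp (t*x) * (iterConvZ p (n+1) (x-j) * p j)
        ≤ ∑' j : ℤ, M^(n+1) * (Real.exp (t*j) * p j) := Summable.tsum_le_tsum key hlhs_sum hrhs
      _ = M^(n+1) * M := by rw [tsum_mul_left]
      _ = M^(n+1+1) := by ring

set_option maxHeartbeats 1000000 in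
lemma lemma44_pos {p : ℤ → ℝ} {D d : ℝ}
    (hp_nonneg : ∀ k, 0 ≤ p k) (hp_mass : ∑' k : ℤ, p k = 1)
    (hD : 0 < D) (hd : 0 < d)
    (hg : ∀ x : ℤ, 0 ≤ x → p x ≤ D * Real.exp (-d * (x : ℝ) ^ 2)) :
    ∀ N : ℕ, 1 ≤ N → ∀ x : ℤ, 0 ≤ x →
      iterConvZ p N x ≤
        (D * Real.sqrt Real.pi / Real.sqrt d + 1 + 2 * D) ^ N *
          Real.exp (-d * (x : ℝ) ^ 2 / N) := by
  have hpsum : Summable p := by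
    by_contra h
    rw [tsum_eq_zero_of_not_summable h] at hp_mass
    norm_num at hp_mass
  intro N hN x hx
  obtain ⟨n, rfl⟩ : ∃ n, N = n + 1 := ⟨N - 1, (Nat.succ_pred_eq_of_pos hN).symm⟩
  have hx' : (0:ℝ) ≤ (x:ℝ) := by exact_mod_cast hx
  have hn1 : (0:ℝ) < (n:ℝ) + 1 := by positivity
  set t : ℝ := 2*d*(x:ℝ)/((n:ℝ)+1) with htd
  have ht : 0 ≤ t := by positivity
  obtain ⟨hsum, hMle⟩ := mgf_bound hp_nonneg hpsum hp_mass hD hd hg t ht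
  set W : ℝ := D * Real.sqrt Real.pi / Real.sqrt d + 1 + 2 * D with hW
  set M : ℝ := ∑' k : ℤ, Real.exp (t*k) * p k with hM
  have hM0 : 0 ≤ M := tsum_nonneg fun k => mul_nonneg (Real.exp_pos _).le (hp_nonneg k)
  have hch := chernoff hp_nonneg t hsum n x
  have hpow : M^(n+1) ≤ (W * Real.exp (t^2/(4*d)))^(n+1) := pow_le_pow_left₀ hM0 hMle _
  have step1 : iterConvZ p (n+1) x ≤ Real.exp (-(t*x)) * M^(n+1) := by
    have h2 := mul_le_mul_of_nonneg_left hch (Real.exp_pos (-(t*(x:ℝ)))).le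
    rwa [← mul_assoc, ← Real.exp_add, neg_add_cancel, Real.exp_zero, one_mul] at h2
  have step2 : Real.exp (-(t*(x:ℝ))) * (W * Real.exp (t^2/(4*d)))^(n+1)
      = W^(n+1) * Real.exp (-d*(x:ℝ)^2/((n:ℝ)+1)) := by
    rw [mul_pow]
    have e2 : (Real.exp (t^2/(4*d)))^(n+1) = Real.exp (((n:ℝ)+1) * (t^2/(4*d))) := by
      rw [← Real.exp_nat_mul]
      congr 1
      push_cast
      ring
    rw [e2, ← mul_assoc, mul_comm (Real.exp (-(t*(x:ℝ)))) (W^(n+1)), mul_assoc, ← Real.exp_add]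
    congr 2
    rw [htd]
    field_simp
    ring
  have final : iterConvZ p (n+1) x ≤ W^(n+1) * Real.exp (-d*(x:ℝ)^2/((n:ℝ)+1)) := by
    calc iterConvZ p (n+1) x ≤ Real.exp (-(t*(x:ℝ))) * M^(n+1) := step1
      _ ≤ Real.exp (-(t*(x:ℝ))) * (W * Real.exp (t^2/(4*d)))^(n+1) :=
          mul_le_mul_of_nonneg_left hpow (Real.exp_pos _).le
      _ = W^(n+1) * Real.exp (-d*(x:ℝ)^2/((n:ℝ)+1)) := step2
  have hcast : ((n+1 : ℕ):ℝ) = (n:ℝ)+1 := by push_cast; ring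
  rw [hW] at final
  rw [hcast]
  exact final

lemma iterConvZ_neg (p : ℤ → ℝ) :
    ∀ n : ℕ, ∀ x : ℤ, iterConvZ (fun k => p (-k)) (n+1) x = iterConvZ p (n+1) (-x) := by
  intro n
  induction n with
  | zero => intro x; rfl
  | succ n ih =>
    intro x
    have h0 : iterConvZ (fun k => p (-k)) (n+2) x
        = ∑' j : ℤ, iterConvZ (fun k => p (-k)) (n+1) (x - j) * p (-j) := rfl
    have h1 : iterConvZ p (n+2) (-x) = ∑' j : ℤ, iterConvZ p (n+1) (-x - j) * p j := rfl
    rw [h0, h1, ← (Equiv.neg ℤ).tsum_eq (fun j : ℤ => iterConvZ p (n+1) (-x - j) * p j)]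
    congr 1
    ext j
    simp only [Equiv.neg_apply]
    rw [ih (x - j)]
    have : -x - -j = -(x - j) := by ring
    rw [this]

/-- **Lemma 4.4.** If the probability mass function `p_X` satisfies a one-sided Gaussian bound
`p_X(x) ≤ D e^{−d x²}` (for all integers `x ≥ 0`, resp. all `x ≤ 0`), then the pmf of the sum
of `N` i.i.d. copies satisfies `p_N(x) ≤ W^N e^{−d x²/N}` on the same half-line, with
`W = D√π/√d + 1 + 2D`. -/
theorem lemma_4_4
    (p : ℤ → ℝ) (D d : ℝ)
    (hp_nonneg : ∀ k, 0 ≤ p k)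
    (hp_mass : ∑' k : ℤ, p k = 1)
    (hD : 0 < D) (hd : 0 < d) :
    ((∀ x : ℤ, 0 ≤ x → p x ≤ D * Real.exp (-d * (x : ℝ) ^ 2)) →
      ∀ N : ℕ, 1 ≤ N → ∀ x : ℤ, 0 ≤ x →
        iterConvZ p N x ≤
          (D * Real.sqrt Real.pi / Real.sqrt d + 1 + 2 * D) ^ N *
            Real.exp (-d * (x : ℝ) ^ 2 / N)) ∧
    ((∀ x : ℤ, x ≤ 0 → p x ≤ D * Real.exp (-d * (x : ℝ) ^ 2)) →
      ∀ N : ℕ, 1 ≤ N → ∀ x : ℤ, x ≤ 0 →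
        iterConvZ p N x ≤
          (D * Real.sqrt Real.pi / Real.sqrt d + 1 + 2 * D) ^ N *
            Real.exp (-d * (x : ℝ) ^ 2 / N)) := by
  constructor
  · intro hg
    exact lemma44_pos hp_nonneg hp_mass hD hd hg
  · intro hg N hN x hx
    have hq_nonneg : ∀ k : ℤ, 0 ≤ (fun k => p (-k)) k := fun k => hp_nonneg _
    have hq_mass : ∑' k : ℤ, (fun k => p (-k)) k = 1 := by
      rw [← hp_mass]
      exact (Equiv.neg ℤ).tsum_eq p
    have hq_g : ∀ y : ℤ, 0 ≤ y → (fun k => p (-k)) y ≤ D * Real.exp (-d * (y:ℝ)^2) := by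
      intro y hy
      have h := hg (-y) (by omega)
      have h2 : ((-y : ℤ):ℝ)^2 = ((y : ℤ):ℝ)^2 := by push_cast; ring
      rw [h2] at h
      exact h
    obtain ⟨n, rfl⟩ : ∃ n, N = n + 1 := ⟨N - 1, (Nat.succ_pred_eq_of_pos hN).symm⟩
    have h := lemma44_pos hq_nonneg hq_mass hD hd hq_g (n+1) hN (-x) (by omega)
    rw [iterConvZ_neg p n (-x), neg_neg] at h
    have h2 : ((-x : ℤ):ℝ)^2 = ((x : ℤ):ℝ)^2 := by push_cast; ring
    rw [h2] at h
    exact h
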